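/- Every 3-multiplicity antichain F ⊆ 2^[8] with 1 ∈ S(F) satisfies S(F) ⊆ {1, 2, 3, 4}; in particular |S(F)| ≤ 4. -/
import Mathlib


theorem stmt_18 (F : Finset (Finset (Fin 8)))
    (hanti : ∀ A ∈ F, ∀ B ∈ F, A ≠ B → ¬ A ⊆ B)
    (hmult : ∀ t ∈ F.image Finset.card,
      3 ≤ (F.filter (fun A => A.card = t)).card)
    (h1 : 1 ∈ F.image Finset.card) :
    F.image Finset.card ⊆ ({1, 2, 3, 4} : Finset ℕ) := by
  intro t ht
  simp only [Finset.mem_insert, Finset.mem_singleton]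
  by_contra hcon
  push_neg at hcon
  obtain ⟨ht1, ht2, ht3, ht4⟩ := hcon
  have h3 := hmult 1 h1
  obtain ⟨S1, S2, S3, hS1, hS2, hS3, h12, h13, h23⟩ :=
    Finset.two_lt_card_iff.mp (show 2 < (F.filter (fun A => A.card = 1)).card by omega)
  simp only [Finset.mem_filter] at hS1 hS2 hS3
  obtain ⟨a, rfl⟩ := Finset.card_eq_one.mp hS1.2
  obtain ⟨b, rfl⟩ := Finset.card_eq_one.mp hS2.2
  obtain ⟨c, rfl⟩ := Finset.card_eq_one.mp hS3.2
  have hab : a ≠ b := fun h => h12 (by rw [h])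
  have hac : a ≠ c := fun h => h13 (by rw [h])
  have hbc : b ≠ c := fun h => h23 (by rw [h])
  obtain ⟨A0, hA0, hA0c⟩ := Finset.mem_image.mp ht
  rcases Nat.eq_zero_or_pos t with h0 | hpos
  · subst h0
    rw [Finset.card_eq_zero] at hA0c
    subst hA0c
    exact hanti ∅ hA0 {a} hS1.1 (Ne.symm (Finset.singleton_ne_empty a)) (Finset.empty_subset _)
  · have ht5 : 5 ≤ t := by omega
    set C : Finset (Fin 8) := Finset.univ \ {a, b, c} with hC
    have hcardabc : ({a, b, c} : Finset (Fin 8)).card = 3 := by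
      rw [Finset.card_insert_of_notMem (by simp [hab, hac]),
        Finset.card_insert_of_notMem (by simp [hbc]), Finset.card_singleton]
    have hcardC : C.card = 5 := by
      rw [hC, Finset.card_sdiff_of_subset (Finset.subset_univ _), hcardabc]
      simp
    have key : ∀ A ∈ F, A.card = t → A = C := by
      intro A hA hAc
      have hav : ∀ x : Fin 8, ({x} : Finset (Fin 8)) ∈ F → x ∉ A := by
        intro x hx hxA
        exact hanti {x} hx A hA
          (fun h => by rw [← h, Finset.card_singleton] at hAc; omega)
          (Finset.singleton_subset_iff.mpr hxA)
      have hsub : A ⊆ C := by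
        intro x hxA
        simp only [hC, Finset.mem_sdiff, Finset.mem_univ, true_and,
          Finset.mem_insert, Finset.mem_singleton]
        push_neg
        refine ⟨?_, ?_, ?_⟩ <;> rintro rfl
        · exact hav _ hS1.1 hxA
        · exact hav _ hS2.1 hxA
        · exact hav _ hS3.1 hxA
      have hle : t ≤ 5 := hAc ▸ hcardC ▸ Finset.card_le_card hsub
      exact Finset.eq_of_subset_of_card_le hsub (by omega)
    have hle1 : (F.filter (fun A => A.card = t)).card ≤ 1 := by
      apply Finset.card_le_one.mpr
      intro A hA B hB
      simp only [Finset.mem_filter] at hA hB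
      rw [key A hA.1 hA.2, key B hB.1 hB.2]
    have := hmult t ht
    omega
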